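/- On the free step-2 Carnot group $\mathbb{F}_r$, the symmetrized horizontal Hessian of the gauge $\rho = (|x_H|^4+|x_V|^2)^{1/4}$ satisfies $(D^2_{\mathbb{F}_r}\rho)^* = \frac{3|x_H|^2}{\rho^4}\rho\, I_r - \frac{3}{\rho}D_{\mathbb{F}_r}\rho\otimes D_{\mathbb{F}_r}\rho$ at points with $\rho\neq0$; equivalently, $X_iX_k\rho + X_kX_i\rho = \frac{6|x_H|^2}{\rho^3}\delta_{ik} - \frac{6}{\rho}(X_i\rho)(X_k\rho)$ for all $1\leq i,k\leq r$. -/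

import Mathlib

noncomputable section

/-- Gauge `ρ = (|x_H|⁴ + |x_V|²)^{1/4}` on the free step-2 Carnot group `𝔽_r`. -/
def rhoF {r : ℕ} (p : (Fin r → ℝ) × (Fin r → Fin r → ℝ)) : ℝ :=
  ((∑ i, p.1 i ^ 2) ^ 2 + ∑ k, ∑ j, if j < k then p.2 k j ^ 2 else 0) ^ (1/4 : ℝ)

/-- Partial derivative `∂_k u` (horizontal coordinate `x_k`). -/
def pdXF {r : ℕ} (k : Fin r) (u : (Fin r → ℝ) × (Fin r → Fin r → ℝ) → ℝ)
    (p : (Fin r → ℝ) × (Fin r → Fin r → ℝ)) : ℝ :=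
  deriv (fun s => u (Function.update p.1 k s, p.2)) (p.1 k)

/-- Partial derivative `∂_{ab} u` (vertical coordinate `t_{ab}`). -/
def pdTF {r : ℕ} (a b : Fin r) (u : (Fin r → ℝ) × (Fin r → Fin r → ℝ) → ℝ)
    (p : (Fin r → ℝ) × (Fin r → Fin r → ℝ)) : ℝ :=
  deriv (fun s => u (p.1, Function.update p.2 a (Function.update (p.2 a) b s))) (p.2 a b)

/-- The generator `X_k = ∂_k + 2(∑_{j>k} x_j ∂_{jk} - ∑_{j<k} x_j ∂_{kj})` of `𝔽_r`. -/
def XF {r : ℕ} (k : Fin r) (u : (Fin r → ℝ) × (Fin r → Fin r → ℝ) → ℝ)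
    (p : (Fin r → ℝ) × (Fin r → Fin r → ℝ)) : ℝ :=
  pdXF k u p + 2 * ((∑ j, if k < j then p.1 j * pdTF j k u p else 0)
    - ∑ j, if j < k then p.1 j * pdTF k j u p else 0)

namespace Stmt15Aux
open Finset

variable {r : ℕ}

abbrev Pt (r : ℕ) := (Fin r → ℝ) × (Fin r → Fin r → ℝ)

def A (p : Pt r) : ℝ := ∑ i, p.1 i ^ 2
def Bv (p : Pt r) : ℝ := ∑ k, ∑ j, if j < k then p.2 k j ^ 2 else 0
def Nf (p : Pt r) : ℝ := A p ^ 2 + Bv p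
def z (k : Fin r) (p : Pt r) : ℝ :=
  A p * p.1 k + ((∑ j, if k < j then p.1 j * p.2 j k else 0)
    - ∑ j, if j < k then p.1 j * p.2 k j else 0)

def upX (p : Pt r) (i : Fin r) (s : ℝ) : Pt r := (Function.update p.1 i s, p.2)
def upT (p : Pt r) (a b : Fin r) (s : ℝ) : Pt r :=
  (p.1, Function.update p.2 a (Function.update (p.2 a) b s))

lemma upX_self (p : Pt r) (i : Fin r) : upX p i (p.1 i) = p := by
  simp [upX, Function.update_eq_self]

lemma upT_self (p : Pt r) (a b : Fin r) : upT p a b (p.2 a b) = p := by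
  simp [upT, Function.update_eq_self]

lemma Nf_nonneg (p : Pt r) : 0 ≤ Nf p := by
  have : 0 ≤ Bv p := by
    apply Finset.sum_nonneg; intro k _; apply Finset.sum_nonneg; intro j _
    split <;> positivity
  have h2 : 0 ≤ A p ^ 2 := sq_nonneg _
  unfold Nf; linarith

lemma hasDerivAt_upX_coord (p : Pt r) (i j : Fin r) :
    HasDerivAt (fun s => (upX p i s).1 j) (if j = i then 1 else 0) (p.1 i) := by
  rcases eq_or_ne j i with h | h
  · subst h
    simp only [upX, Function.update_self, if_pos rfl]
    exact hasDerivAt_id _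
  · simp only [upX, Function.update_of_ne h, if_neg h]
    exact hasDerivAt_const _ _

lemma hasDerivAt_upT_coord (p : Pt r) (a b c d : Fin r) :
    HasDerivAt (fun s => (upT p a b s).2 c d) (if c = a ∧ d = b then 1 else 0) (p.2 a b) := by
  rcases eq_or_ne c a with h | h
  · rcases eq_or_ne d b with h2 | h2
    · simp only [upT, h, h2, Function.update_self, eq_self_iff_true, and_self, if_true]
      exact hasDerivAt_id _
    · simp only [upT, h, Function.update_self, Function.update_of_ne h2, h2, and_false, if_false]
      exact hasDerivAt_const _ _
  · simp only [upT, Function.update_of_ne h, h, false_and, if_false]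
    exact hasDerivAt_const _ _

lemma hasDerivAt_A_X (p : Pt r) (i : Fin r) :
    HasDerivAt (fun s => A (upX p i s)) (2 * p.1 i) (p.1 i) := by
  have h : ∀ j ∈ Finset.univ, HasDerivAt (fun s => (upX p i s).1 j ^ 2)
      (if j = i then 2 * p.1 i else 0) (p.1 i) := by
    intro j _
    have := (hasDerivAt_upX_coord p i j).fun_pow 2
    rcases eq_or_ne j i with h | h
    · subst h; simpa [upX] using this
    · simpa [upX, h, Function.update_of_ne h] using this
  have := HasDerivAt.fun_sum h
  simpa [A, Finset.sum_ite_eq'] using this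

lemma hasDerivAt_Bv_X (p : Pt r) (i : Fin r) :
    HasDerivAt (fun s => Bv (upX p i s)) 0 (p.1 i) := by
  show HasDerivAt (fun _ => Bv p) 0 (p.1 i)
  exact hasDerivAt_const _ _

lemma hasDerivAt_Nf_X (p : Pt r) (i : Fin r) :
    HasDerivAt (fun s => Nf (upX p i s)) (4 * A p * p.1 i) (p.1 i) := by
  have h1 := (hasDerivAt_A_X p i).fun_pow 2
  have h2 := hasDerivAt_Bv_X p i
  have h3 := h1.fun_add h2
  have : A (upX p i (p.1 i)) = A p := by rw [upX_self]
  rw [this] at h3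
  convert h3 using 1
  · rfl
  · rfl
  · rfl
  ring


lemma sum_delta (i : Fin r) (f : Fin r → ℝ) :
    ∑ j, (if j = i then f j else 0) = f i := by
  simp [Finset.sum_ite_eq']

lemma hasDerivAt_z_X (p : Pt r) (i k : Fin r) :
    HasDerivAt (fun s => z k (upX p i s))
      (2 * p.1 i * p.1 k + A p * (if k = i then 1 else 0)
        + ((if k < i then p.2 i k else 0) - (if i < k then p.2 k i else 0))) (p.1 i) := by
  have h1 : HasDerivAt (fun s => A (upX p i s) * (upX p i s).1 k)
      (2 * p.1 i * p.1 k + A p * (if k = i then 1 else 0)) (p.1 i) := by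
    have := (hasDerivAt_A_X p i).mul (hasDerivAt_upX_coord p i k)
    rw [upX_self] at this
    exact this
  have h2 : HasDerivAt (fun s => ∑ j, if k < j then (upX p i s).1 j * p.2 j k else 0)
      (if k < i then p.2 i k else 0) (p.1 i) := by
    have h : ∀ j ∈ Finset.univ, HasDerivAt
        (fun s => if k < j then (upX p i s).1 j * p.2 j k else 0)
        (if j = i then (if k < i then p.2 i k else 0) else 0) (p.1 i) := by
      intro j _
      by_cases hkj : k < j
      · have := (hasDerivAt_upX_coord p i j).mul_const (p.2 j k)
        rcases eq_or_ne j i with hji | hji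
        · subst hji; simpa [hkj] using this
        · simpa [hkj, hji] using this
      · rcases eq_or_ne j i with hji | hji
        · subst hji; simp only [if_neg hkj, if_pos rfl]
          exact hasDerivAt_const _ _
        · simp only [if_neg hkj, if_neg hji]
          exact hasDerivAt_const _ _
    have := HasDerivAt.fun_sum h
    simpa [sum_delta] using this
  have h3 : HasDerivAt (fun s => ∑ j, if j < k then (upX p i s).1 j * p.2 k j else 0)
      (if i < k then p.2 k i else 0) (p.1 i) := by
    have h : ∀ j ∈ Finset.univ, HasDerivAt
        (fun s => if j < k then (upX p i s).1 j * p.2 k j else 0)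
        (if j = i then (if i < k then p.2 k i else 0) else 0) (p.1 i) := by
      intro j _
      by_cases hkj : j < k
      · have := (hasDerivAt_upX_coord p i j).mul_const (p.2 k j)
        rcases eq_or_ne j i with hji | hji
        · subst hji; simpa [hkj] using this
        · simpa [hkj, hji] using this
      · rcases eq_or_ne j i with hji | hji
        · subst hji; simp only [if_neg hkj, if_pos rfl, if_neg hkj]
          exact hasDerivAt_const _ _
        · simp only [if_neg hkj, if_neg hji]
          exact hasDerivAt_const _ _
    have := HasDerivAt.fun_sum h
    simpa [sum_delta] using this
  exact h1.add (h2.sub h3)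

lemma hasDerivAt_A_T (p : Pt r) (a b : Fin r) :
    HasDerivAt (fun s => A (upT p a b s)) 0 (p.2 a b) := by
  show HasDerivAt (fun _ => A p) 0 (p.2 a b)
  exact hasDerivAt_const _ _

lemma hasDerivAt_Bv_T (p : Pt r) (a b : Fin r) :
    HasDerivAt (fun s => Bv (upT p a b s))
      (if b < a then 2 * p.2 a b else 0) (p.2 a b) := by
  have h : ∀ k ∈ Finset.univ, HasDerivAt
      (fun s => ∑ j, if j < k then ((upT p a b s).2 k j) ^ 2 else 0)
      (if k = a then (if b < a then 2 * p.2 a b else 0) else 0) (p.2 a b) := by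
    intro k _
    have h2 : ∀ j ∈ Finset.univ, HasDerivAt
        (fun s => if j < k then ((upT p a b s).2 k j) ^ 2 else 0)
        (if j = b then (if k = a then (if b < a then 2 * p.2 a b else 0) else 0) else 0)
        (p.2 a b) := by
      intro j _
      by_cases hall : j < k ∧ k = a ∧ j = b
      · obtain ⟨hjk, hk, hj⟩ := hall
        subst hk; subst hj
        have := (hasDerivAt_upT_coord p k j k j).fun_pow 2
        simpa [hjk, upT_self] using this
      · have hd : (if j = b then (if k = a then (if b < a then 2 * p.2 a b else 0) else 0) else 0) = 0 := by
          by_cases hj : j = b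
          · by_cases hk : k = a
            · subst hj; subst hk
              have hba : ¬ j < k := fun h' => hall ⟨h', rfl, rfl⟩
              simp [hba]
            · simp [hj, hk]
          · simp [hj]
        rw [hd]
        by_cases hjk : j < k
        · have hz : ¬(k = a ∧ j = b) := fun h => hall ⟨hjk, h.1, h.2⟩
          have := (hasDerivAt_upT_coord p a b k j).fun_pow 2
          simpa [hjk, hz, upT_self] using this
        · simp only [if_neg hjk]
          exact hasDerivAt_const _ _
    have := HasDerivAt.fun_sum h2
    simpa [sum_delta] using this
  have := HasDerivAt.fun_sum h
  simpa [Bv, sum_delta] using this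


lemma hasDerivAt_Nf_T (p : Pt r) (a b : Fin r) :
    HasDerivAt (fun s => Nf (upT p a b s))
      (if b < a then 2 * p.2 a b else 0) (p.2 a b) := by
  have h1 := ((hasDerivAt_A_T p a b).fun_pow 2).fun_add (hasDerivAt_Bv_T p a b)
  convert h1 using 1
  · rfl
  · rfl
  · rfl
  ring

lemma hasDerivAt_z_T (p : Pt r) (a b k : Fin r) :
    HasDerivAt (fun s => z k (upT p a b s))
      ((if k < a ∧ k = b then p.1 a else 0) - (if b < k ∧ k = a then p.1 b else 0))
      (p.2 a b) := by
  have h1 : HasDerivAt (fun s => A (upT p a b s) * (upT p a b s).1 k) 0 (p.2 a b) := by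
    show HasDerivAt (fun _ => A p * p.1 k) 0 (p.2 a b)
    exact hasDerivAt_const _ _
  have h2 : HasDerivAt (fun s => ∑ j, if k < j then (upT p a b s).1 j * (upT p a b s).2 j k else 0)
      (if k < a ∧ k = b then p.1 a else 0) (p.2 a b) := by
    have h : ∀ j ∈ Finset.univ, HasDerivAt
        (fun s => if k < j then (upT p a b s).1 j * (upT p a b s).2 j k else 0)
        (if j = a then (if k < a ∧ k = b then p.1 a else 0) else 0) (p.2 a b) := by
      intro j _
      by_cases hall : k < j ∧ j = a ∧ k = b
      · obtain ⟨hkj, hj, hk⟩ := hall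
        have hba : b < a := by simpa [hj, hk] using hkj
        have := ((hasDerivAt_upT_coord p a b j k).const_mul (p.1 j))
        simpa [hj, hk, hba, upT_self, upT] using this
      · have hd : (if j = a then (if k < a ∧ k = b then p.1 a else 0) else 0) = 0 := by
          by_cases hj : j = a
          · have : ¬(k < a ∧ k = b) := fun h => hall ⟨hj ▸ h.1, hj, h.2⟩
            simp [this]
          · simp [hj]
        rw [hd]
        by_cases hkj : k < j
        · have hz : ¬(j = a ∧ k = b) := fun h => hall ⟨hkj, h.1, h.2⟩
          have := ((hasDerivAt_upT_coord p a b j k).const_mul (p.1 j))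
          simpa [hkj, hz, upT_self, upT] using this
        · simp only [if_neg hkj]
          exact hasDerivAt_const _ _
    have := HasDerivAt.fun_sum h
    simpa [sum_delta] using this
  have h3 : HasDerivAt (fun s => ∑ j, if j < k then (upT p a b s).1 j * (upT p a b s).2 k j else 0)
      (if b < k ∧ k = a then p.1 b else 0) (p.2 a b) := by
    have h : ∀ j ∈ Finset.univ, HasDerivAt
        (fun s => if j < k then (upT p a b s).1 j * (upT p a b s).2 k j else 0)
        (if j = b then (if b < k ∧ k = a then p.1 b else 0) else 0) (p.2 a b) := by
      intro j _
      by_cases hall : j < k ∧ k = a ∧ j = b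
      · obtain ⟨hjk, hk, hj⟩ := hall
        have hba : b < a := by simpa [hj, hk] using hjk
        have := ((hasDerivAt_upT_coord p a b k j).const_mul (p.1 j))
        simpa [hj, hk, hba, upT_self, upT] using this
      · have hd : (if j = b then (if b < k ∧ k = a then p.1 b else 0) else 0) = 0 := by
          by_cases hj : j = b
          · have : ¬(b < k ∧ k = a) := fun h => hall ⟨hj ▸ h.1, h.2, hj⟩
            simp [hj, this]
          · simp [hj]
        rw [hd]
        by_cases hjk : j < k
        · have hz : ¬(k = a ∧ j = b) := fun h => hall ⟨hjk, h.1, h.2⟩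
          have := ((hasDerivAt_upT_coord p a b k j).const_mul (p.1 j))
          simpa [hjk, hz, upT_self, upT] using this
        · simp only [if_neg hjk]
          exact hasDerivAt_const _ _
    have := HasDerivAt.fun_sum h
    simpa [sum_delta] using this
  have := h1.fun_add (h2.fun_sub h3)
  simpa [z] using this

lemma rhoF_eq (p : Pt r) : rhoF p = Nf p ^ ((1:ℝ)/4) := rfl

lemma hasDerivAt_rho_X (p : Pt r) (i : Fin r) (hp : 0 < Nf p) :
    HasDerivAt (fun s => rhoF (upX p i s))
      (A p * p.1 i / Nf p ^ ((3:ℝ)/4)) (p.1 i) := by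
  have hne : Nf (upX p i (p.1 i)) ≠ 0 := by rw [upX_self]; exact hp.ne'
  have h := (hasDerivAt_Nf_X p i).rpow_const (p := (1:ℝ)/4) (Or.inl hne)
  rw [upX_self] at h
  have he : ((1:ℝ)/4 - 1) = -(3/4) := by norm_num
  rw [he, Real.rpow_neg (Nf_nonneg p)] at h
  convert h using 1
  · rfl
  rw [div_eq_mul_inv]
  ring


lemma hasDerivAt_rho_T (p : Pt r) (a b : Fin r) (hp : 0 < Nf p) :
    HasDerivAt (fun s => rhoF (upT p a b s))
      ((if b < a then p.2 a b else 0) / (2 * Nf p ^ ((3:ℝ)/4))) (p.2 a b) := by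
  have hne : Nf (upT p a b (p.2 a b)) ≠ 0 := by rw [upT_self]; exact hp.ne'
  have h := (hasDerivAt_Nf_T p a b).rpow_const (p := (1:ℝ)/4) (Or.inl hne)
  rw [upT_self] at h
  rw [show ((1:ℝ)/4 - 1) = -(3/4) by norm_num, Real.rpow_neg (Nf_nonneg p)] at h
  have hD : Nf p ^ ((3:ℝ)/4) ≠ 0 := by positivity
  convert h using 1
  · rfl
  split <;> field_simp <;> ring

lemma pdXF_rho (p : Pt r) (hp : 0 < Nf p) (k : Fin r) :
    pdXF k rhoF p = A p * p.1 k / Nf p ^ ((3:ℝ)/4) :=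
  (hasDerivAt_rho_X p k hp).deriv

lemma pdTF_rho (p : Pt r) (hp : 0 < Nf p) (a b : Fin r) :
    pdTF a b rhoF p = (if b < a then p.2 a b else 0) / (2 * Nf p ^ ((3:ℝ)/4)) :=
  (hasDerivAt_rho_T p a b hp).deriv

lemma XF_rho (p : Pt r) (hp : 0 < Nf p) (k : Fin r) :
    XF k rhoF p = z k p / Nf p ^ ((3:ℝ)/4) := by
  have hD : Nf p ^ ((3:ℝ)/4) ≠ 0 := by positivity
  have hs1 : (∑ j, if k < j then p.1 j * pdTF j k rhoF p else 0)
      = (∑ j, if k < j then p.1 j * p.2 j k else 0) / (2 * Nf p ^ ((3:ℝ)/4)) := by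
    rw [Finset.sum_div]
    refine Finset.sum_congr rfl fun j _ => ?_
    by_cases h : k < j
    · rw [if_pos h, if_pos h, pdTF_rho p hp j k, if_pos h, mul_div_assoc]
    · simp [h]
  have hs2 : (∑ j, if j < k then p.1 j * pdTF k j rhoF p else 0)
      = (∑ j, if j < k then p.1 j * p.2 k j else 0) / (2 * Nf p ^ ((3:ℝ)/4)) := by
    rw [Finset.sum_div]
    refine Finset.sum_congr rfl fun j _ => ?_
    by_cases h : j < k
    · rw [if_pos h, if_pos h, pdTF_rho p hp k j, if_pos h, mul_div_assoc]
    · simp [h]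
  unfold XF
  rw [pdXF_rho p hp k, hs1, hs2]
  unfold z
  field_simp


/-- the closed-form first horizontal derivative as a global function -/
def G (k : Fin r) (q : Pt r) : ℝ := z k q / Nf q ^ ((3:ℝ)/4)

lemma pdXF_g (p : Pt r) (hp : 0 < Nf p) (i k : Fin r) :
    pdXF i (G k) p
      = ((2 * p.1 i * p.1 k + A p * (if k = i then 1 else 0)
          + ((if k < i then p.2 i k else 0) - (if i < k then p.2 k i else 0)))
            * Nf p ^ ((3:ℝ)/4)
         - z k p * (3 * A p * p.1 i * Nf p ^ ((3:ℝ)/4 - 1)))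
        / (Nf p ^ ((3:ℝ)/4)) ^ 2 := by
  have hne : Nf (upX p i (p.1 i)) ≠ 0 := by rw [upX_self]; exact hp.ne'
  have hz := hasDerivAt_z_X p i k
  have hD := (hasDerivAt_Nf_X p i).rpow_const (p := (3:ℝ)/4) (Or.inl hne)
  rw [upX_self] at hD
  have hDne : Nf (upX p i (p.1 i)) ^ ((3:ℝ)/4) ≠ 0 := by
    rw [upX_self]; positivity
  have h := (hz.fun_div hD hDne).deriv
  rw [upX_self] at h
  rw [show pdXF i (G k) p
      = deriv (fun s => z k (upX p i s) / Nf (upX p i s) ^ ((3:ℝ)/4)) (p.1 i) from rfl, h]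
  congr 1
  ring

lemma pdTF_g (p : Pt r) (hp : 0 < Nf p) (a b k : Fin r) :
    pdTF a b (G k) p
      = (((if k < a ∧ k = b then p.1 a else 0) - (if b < k ∧ k = a then p.1 b else 0))
            * Nf p ^ ((3:ℝ)/4)
         - z k p * ((3:ℝ)/2 * (if b < a then p.2 a b else 0) * Nf p ^ ((3:ℝ)/4 - 1)))
        / (Nf p ^ ((3:ℝ)/4)) ^ 2 := by
  have hne : Nf (upT p a b (p.2 a b)) ≠ 0 := by rw [upT_self]; exact hp.ne'
  have hz := hasDerivAt_z_T p a b k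
  have hD := (hasDerivAt_Nf_T p a b).rpow_const (p := (3:ℝ)/4) (Or.inl hne)
  rw [upT_self] at hD
  have hDne : Nf (upT p a b (p.2 a b)) ^ ((3:ℝ)/4) ≠ 0 := by
    rw [upT_self]; positivity
  have h := (hz.fun_div hD hDne).deriv
  rw [upT_self] at h
  rw [show pdTF a b (G k) p
      = deriv (fun s => z k (upT p a b s) / Nf (upT p a b s) ^ ((3:ℝ)/4)) (p.2 a b) from rfl, h]
  congr 1
  by_cases hba : b < a <;> simp only [if_pos, if_neg, hba, if_true, if_false] <;> ring

lemma pdXF_congr_rho (p : Pt r) (hp : 0 < Nf p) (i k : Fin r) :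
    pdXF i (XF k rhoF) p = pdXF i (G k) p := by
  have hc : ContinuousAt (fun s => Nf (upX p i s)) (p.1 i) :=
    (hasDerivAt_Nf_X p i).continuousAt
  have h0 : 0 < Nf (upX p i (p.1 i)) := by rw [upX_self]; exact hp
  have hev : ∀ᶠ s in nhds (p.1 i), 0 < Nf (upX p i s) :=
    hc (Ioi_mem_nhds h0)
  have heq : (fun s => XF k rhoF (upX p i s)) =ᶠ[nhds (p.1 i)]
      (fun s => G k (upX p i s)) := by
    filter_upwards [hev] with s hs
    exact XF_rho (upX p i s) hs k
  exact heq.deriv_eq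

lemma pdTF_congr_rho (p : Pt r) (hp : 0 < Nf p) (a b k : Fin r) :
    pdTF a b (XF k rhoF) p = pdTF a b (G k) p := by
  have hc : ContinuousAt (fun s => Nf (upT p a b s)) (p.2 a b) :=
    (hasDerivAt_Nf_T p a b).continuousAt
  have h0 : 0 < Nf (upT p a b (p.2 a b)) := by rw [upT_self]; exact hp
  have hev : ∀ᶠ s in nhds (p.2 a b), 0 < Nf (upT p a b s) :=
    hc (Ioi_mem_nhds h0)
  have heq : (fun s => XF k rhoF (upT p a b s)) =ᶠ[nhds (p.2 a b)]
      (fun s => G k (upT p a b s)) := by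
    filter_upwards [hev] with s hs
    exact XF_rho (upT p a b s) hs k
  exact heq.deriv_eq

lemma XF_congr (p : Pt r) (i : Fin r) (F G' : Pt r → ℝ)
    (hX : pdXF i F p = pdXF i G' p)
    (hT : ∀ a b, pdTF a b F p = pdTF a b G' p) : XF i F p = XF i G' p := by
  unfold XF
  rw [hX]
  simp only [hT]

lemma XF_congr_rho (p : Pt r) (hp : 0 < Nf p) (i k : Fin r) :
    XF i (XF k rhoF) p = XF i (G k) p :=
  XF_congr p i _ _ (pdXF_congr_rho p hp i k) (fun a b => pdTF_congr_rho p hp a b k)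


lemma XF_G (p : Pt r) (hp : 0 < Nf p) (i k : Fin r) :
    XF i (G k) p
      = (3 * A p * (if k = i then 1 else 0)
          + ((if k < i then p.2 i k else 0) - (if i < k then p.2 k i else 0)))
          / rhoF p ^ 3
        - 3 * z i p * z k p / rhoF p ^ 7 := by
  have hρpos : 0 < rhoF p := Real.rpow_pos_of_pos hp _
  have hD3 : rhoF p ^ 3 = Nf p ^ ((3:ℝ)/4) := by
    rw [rhoF_eq, ← Real.rpow_natCast (Nf p ^ ((1:ℝ)/4)) 3, ← Real.rpow_mul (Nf_nonneg p)]
    norm_num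
  have hE : Nf p ^ ((3:ℝ)/4 - 1) = (rhoF p)⁻¹ := by
    rw [rhoF_eq, show ((3:ℝ)/4 - 1) = -(1/4) by norm_num, Real.rpow_neg (Nf_nonneg p)]
  have hplus : (∑ j, if i < j then p.1 j * pdTF j i (G k) p else 0)
      = (∑ j, if i < j then p.1 j * ((if k < j ∧ k = i then p.1 j else 0)
            - (if i < k ∧ k = j then p.1 i else 0)) else 0)
          * (Nf p ^ ((3:ℝ)/4) / (Nf p ^ ((3:ℝ)/4)) ^ 2)
        - (∑ j, if i < j then p.1 j * p.2 j i else 0)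
          * (z k p * ((3:ℝ)/2) * Nf p ^ ((3:ℝ)/4 - 1) / (Nf p ^ ((3:ℝ)/4)) ^ 2) := by
    rw [Finset.sum_mul, Finset.sum_mul, ← Finset.sum_sub_distrib]
    refine Finset.sum_congr rfl fun j _ => ?_
    by_cases h : i < j
    · rw [if_pos h, if_pos h, if_pos h, pdTF_g p hp j i k, if_pos h]
      ring
    · simp [h]
  have hminus : (∑ j, if j < i then p.1 j * pdTF i j (G k) p else 0)
      = (∑ j, if j < i then p.1 j * ((if k < i ∧ k = j then p.1 i else 0)
            - (if j < k ∧ k = i then p.1 j else 0)) else 0)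
          * (Nf p ^ ((3:ℝ)/4) / (Nf p ^ ((3:ℝ)/4)) ^ 2)
        - (∑ j, if j < i then p.1 j * p.2 i j else 0)
          * (z k p * ((3:ℝ)/2) * Nf p ^ ((3:ℝ)/4 - 1) / (Nf p ^ ((3:ℝ)/4)) ^ 2) := by
    rw [Finset.sum_mul, Finset.sum_mul, ← Finset.sum_sub_distrib]
    refine Finset.sum_congr rfl fun j _ => ?_
    by_cases h : j < i
    · rw [if_pos h, if_pos h, if_pos h, pdTF_g p hp i j k, if_pos h]
      ring
    · simp [h]
  have hA1 : (∑ j, if i < j then p.1 j * ((if k < j ∧ k = i then p.1 j else 0)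
        - (if i < k ∧ k = j then p.1 i else 0)) else 0)
      = (if k = i then ∑ j, (if i < j then p.1 j ^ 2 else 0) else 0)
        - (if i < k then p.1 k * p.1 i else 0) := by
    have e : ∀ j, (if i < j then p.1 j * ((if k < j ∧ k = i then p.1 j else 0)
          - (if i < k ∧ k = j then p.1 i else 0)) else 0)
        = (if k = i then (if i < j then p.1 j ^ 2 else 0) else 0)
          - (if j = k then (if i < k then p.1 k * p.1 i else 0) else 0) := by
      intro j
      split_ifs <;>
        first
          | ring1
          | (exfalso; omega)
          | (subst_vars; ring1)
    rw [Finset.sum_congr rfl (fun j _ => e j), Finset.sum_sub_distrib, sum_delta]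
    by_cases hki : k = i <;> simp [hki]
  have hA2 : (∑ j, if j < i then p.1 j * ((if k < i ∧ k = j then p.1 i else 0)
        - (if j < k ∧ k = i then p.1 j else 0)) else 0)
      = (if k < i then p.1 k * p.1 i else 0)
        - (if k = i then ∑ j, (if j < i then p.1 j ^ 2 else 0) else 0) := by
    have e : ∀ j, (if j < i then p.1 j * ((if k < i ∧ k = j then p.1 i else 0)
          - (if j < k ∧ k = i then p.1 j else 0)) else 0)
        = (if j = k then (if k < i then p.1 k * p.1 i else 0) else 0)
          - (if k = i then (if j < i then p.1 j ^ 2 else 0) else 0) := by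
      intro j
      split_ifs <;>
        first
          | ring1
          | (exfalso; omega)
          | (subst_vars; ring1)
    rw [Finset.sum_congr rfl (fun j _ => e j), Finset.sum_sub_distrib, sum_delta]
    by_cases hki : k = i <;> simp [hki]
  have hzi : z i p = A p * p.1 i + ((∑ j, if i < j then p.1 j * p.2 j i else 0)
      - ∑ j, if j < i then p.1 j * p.2 i j else 0) := rfl
  have hC : (∑ j, if j < i then p.1 j * p.2 i j else 0)
      = A p * p.1 i + (∑ j, if i < j then p.1 j * p.2 j i else 0) - z i p := by
    rw [hzi]; ring
  have hQ : (∑ j, if j < i then p.1 j ^ 2 else 0)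
      = A p - p.1 i ^ 2 - (∑ j, if i < j then p.1 j ^ 2 else 0) := by
    have e : ∀ j : Fin r, p.1 j ^ 2
        = (if i < j then p.1 j ^ 2 else 0) + (if j < i then p.1 j ^ 2 else 0)
          + (if j = i then p.1 j ^ 2 else 0) := by
      intro j
      rcases lt_trichotomy i j with h | h | h
      · simp [h, asymm h, (ne_of_lt h).symm]
      · subst h; simp [lt_irrefl]
      · simp [h, asymm h, ne_of_lt h]
    have : A p = (∑ j, (if i < j then p.1 j ^ 2 else 0))
        + (∑ j, (if j < i then p.1 j ^ 2 else 0)) + p.1 i ^ 2 := by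
      rw [show A p = ∑ j, p.1 j ^ 2 from rfl, Finset.sum_congr rfl (fun j _ => e j),
        Finset.sum_add_distrib, Finset.sum_add_distrib, sum_delta]
    linarith
  unfold XF
  rw [pdXF_g p hp i k, hplus, hminus, hA1, hA2, hC, hQ, ← hD3, hE]
  rcases lt_trichotomy k i with h | h | h
  · have h1 : ¬ k = i := ne_of_lt h
    have h2 : ¬ i < k := asymm h
    simp only [h, h1, h2, if_true, if_false]
    field_simp
    ring
  · simp only [h, if_pos rfl, lt_irrefl, if_false, if_true]
    field_simp
    ring
  · have h1 : ¬ k = i := (ne_of_lt h).symm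
    have h2 : ¬ k < i := asymm h
    simp only [h, h1, h2, if_true, if_false]
    field_simp
    ring

end Stmt15Aux

open Stmt15Aux

/-- on `𝔽_r`, at points with `ρ ≠ 0`, the symmetrized horizontal Hessian
of the gauge satisfies `XᵢXₖρ + XₖXᵢρ = (6|x_H|²/ρ³)δᵢₖ - (6/ρ)(Xᵢρ)(Xₖρ)`, i.e.
`(D²_{𝔽_r}ρ)* = (3|x_H|²/ρ⁴)ρ I_r - (3/ρ) D_{𝔽_r}ρ ⊗ D_{𝔽_r}ρ`. -/
theorem stmt15 (r : ℕ) (p : (Fin r → ℝ) × (Fin r → Fin r → ℝ)) (hρ : rhoF p ≠ 0) :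
    ∀ i k : Fin r,
      XF i (XF k rhoF) p + XF k (XF i rhoF) p
        = 6 * (∑ l, p.1 l ^ 2) / rhoF p ^ 3 * (if i = k then (1 : ℝ) else 0)
          - 6 / rhoF p * (XF i rhoF p * XF k rhoF p) := by
  intro i k
  have hp : 0 < Nf p := by
    rcases (Nf_nonneg p).lt_or_eq with h | h
    · exact h
    · exfalso
      apply hρ
      rw [rhoF_eq, ← h]
      exact Real.zero_rpow (by norm_num)
  have hρpos : 0 < rhoF p := Real.rpow_pos_of_pos hp _
  have hD3 : rhoF p ^ 3 = Nf p ^ ((3:ℝ)/4) := by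
    rw [rhoF_eq, ← Real.rpow_natCast (Nf p ^ ((1:ℝ)/4)) 3, ← Real.rpow_mul (Nf_nonneg p)]
    norm_num
  rw [XF_congr_rho p hp i k, XF_congr_rho p hp k i, XF_G p hp i k, XF_G p hp k i,
    XF_rho p hp i, XF_rho p hp k, show (∑ l, p.1 l ^ 2) = A p from rfl, ← hD3]
  by_cases h : i = k
  · simp only [h, if_pos rfl]
    field_simp
    ring
  · have h' : ¬ k = i := fun e => h e.symm
    simp only [if_neg h, if_neg h']
    field_simp
    ring
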